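/- Let ℓ be a nonnegative integer and a a nonzero scalar. The recurrence a·q^{-ℓ+2j+2}·[j+1]·c_{j+1} = [ℓ-j+1]·c_{j-1} for 0 ≤ j ≤ ℓ, with c_{-1} = c_{ℓ+1} = 0 and [m] = (q^m - q^{-m})/(q - q^{-1}), has no nonzero solution (c_0,…,c_ℓ) when ℓ is odd; when ℓ is even, the solution space is one-dimensional, given by c_{2k+1} = 0 and c_{2k} = (-1)^k a^{-k} q^{2k(ℓ-k)} ((q^{-2ℓ};q⁴)_k / (q⁴;q⁴)_k) c_0 for 0 ≤ k ≤ ℓ/2, where (x;q)_k = (1-x)(1-xq)⋯(1-xq^{k-1}). -/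

import Mathlib

noncomputable section

/-- The ground field `K = ℚ(q)`. -/
abbrev K1 : Type := RatFunc ℚ

/-- The indeterminate `q`. -/
noncomputable def q1 : K1 := RatFunc.X

/-- The quantum integer `[m] = (q^m - q^{-m})/(q - q⁻¹)`. -/
noncomputable def qint (m : ℤ) : K1 := (q1 ^ m - q1 ^ (-m)) / (q1 - q1⁻¹)

/-- `c : ℤ → K` is a solution of the recurrence
`a q^{-ℓ+2j+2} [j+1] c_{j+1} = [ℓ-j+1] c_{j-1}` for `0 ≤ j ≤ ℓ`,
with boundary conditions `c_{-1} = c_{ℓ+1} = 0`. -/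
def Sol (ℓ : ℕ) (a : K1) (c : ℤ → K1) : Prop :=
  c (-1) = 0 ∧ c ((ℓ : ℤ) + 1) = 0 ∧
    ∀ j : ℕ, j ≤ ℓ →
      a * q1 ^ (-(ℓ : ℤ) + 2 * j + 2) * qint ((j : ℤ) + 1) * c ((j : ℤ) + 1) =
        qint ((ℓ : ℤ) - j + 1) * c ((j : ℤ) - 1)

lemma q1_ne : q1 ≠ 0 := RatFunc.X_ne_zero

lemma q1_zpow_ne (n : ℤ) : q1 ^ n ≠ 0 := zpow_ne_zero _ q1_ne

lemma q1_pow_ne_one {n : ℤ} (hn : n ≠ 0) : q1 ^ n ≠ 1 := by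
  have key : ∀ m : ℕ, m ≠ 0 → q1 ^ (m : ℤ) ≠ 1 := by
    intro m hm h
    rw [zpow_natCast] at h
    have : (Polynomial.X : Polynomial ℚ) ^ m = 1 := by
      apply IsFractionRing.injective (Polynomial ℚ) (RatFunc ℚ)
      simpa [q1, RatFunc.algebraMap_X] using h
    have := congrArg Polynomial.natDegree this
    simp [Polynomial.natDegree_X_pow] at this
    exact hm this
  rcases lt_or_gt_of_ne hn with h | h
  · intro he
    have : q1 ^ (-n) = 1 := by
      rw [zpow_neg, he, inv_one]
    exact key (-n).toNat (by omega) (by rwa [Int.toNat_of_nonneg (by omega)])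
  · intro he
    rw [← Int.toNat_of_nonneg (le_of_lt h)] at he
    exact key n.toNat (by omega) he

lemma den_ne : q1 - q1⁻¹ ≠ 0 := by
  intro h
  have h1 : q1 = q1⁻¹ := sub_eq_zero.mp h
  apply q1_pow_ne_one (n := 2) two_ne_zero
  have : q1 ^ (2:ℤ) = q1 * q1 := by
    rw [show (2:ℤ) = 1 + 1 by norm_num, zpow_add₀ q1_ne, zpow_one]
  rw [this]
  nth_rewrite 2 [h1]
  exact mul_inv_cancel₀ q1_ne

lemma num_ne {m : ℤ} (hm : m ≠ 0) : q1 ^ m - q1 ^ (-m) ≠ 0 := by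
  intro h
  have h1 : q1 ^ m = q1 ^ (-m) := sub_eq_zero.mp h
  apply q1_pow_ne_one (show 2*m ≠ 0 by omega)
  calc q1 ^ (2*m) = q1 ^ m * q1 ^ m := by
        rw [← zpow_add₀ q1_ne]; congr 1; ring
    _ = q1 ^ m * q1 ^ (-m) := by rw [← h1]
    _ = 1 := by rw [← zpow_add₀ q1_ne]; simp

lemma qint_ne {m : ℤ} (hm : m ≠ 0) : qint m ≠ 0 :=
  div_ne_zero (num_ne hm) den_ne

lemma one_sub_pow_ne {n : ℤ} (hn : n ≠ 0) : 1 - q1 ^ n ≠ 0 := by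
  intro h
  exact q1_pow_ne_one hn (sub_eq_zero.mp h).symm

/-- The closed-form solution coefficients. -/
noncomputable def dcl (ℓ : ℕ) (a : K1) (k : ℕ) : K1 :=
  (-1) ^ k * (a⁻¹) ^ k * q1 ^ (2 * (k : ℤ) * ((ℓ : ℤ) - (k : ℤ))) *
    ((∏ i ∈ Finset.range k, (1 - q1 ^ (-2 * (ℓ : ℤ)) * q1 ^ (4 * (i : ℤ)))) /
      (∏ i ∈ Finset.range k, (1 - q1 ^ (4 : ℤ) * q1 ^ (4 * (i : ℤ)))))

lemma dcl_zero (ℓ : ℕ) (a : K1) : dcl ℓ a 0 = 1 := by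
  simp [dcl]

lemma t_ne (k : ℕ) : 1 - q1 ^ (4 : ℤ) * q1 ^ (4 * (k : ℤ)) ≠ 0 := by
  rw [← zpow_add₀ q1_ne]
  exact one_sub_pow_ne (by omega)

lemma dcl_succ (ℓ : ℕ) (a : K1) (k : ℕ) :
    dcl ℓ a (k + 1) =
      (-a⁻¹ * q1 ^ (2 * (ℓ : ℤ) - 4 * (k : ℤ) - 2) *
          (1 - q1 ^ (-2 * (ℓ : ℤ)) * q1 ^ (4 * (k : ℤ)))) /
        (1 - q1 ^ (4 : ℤ) * q1 ^ (4 * (k : ℤ))) * dcl ℓ a k := by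
  unfold dcl
  rw [Finset.prod_range_succ, Finset.prod_range_succ]
  push_cast
  have hpow : q1 ^ (2 * ((k : ℤ) + 1) * ((ℓ : ℤ) - ((k : ℤ) + 1))) =
      q1 ^ (2 * (ℓ : ℤ) - 4 * (k : ℤ) - 2) * q1 ^ (2 * (k : ℤ) * ((ℓ : ℤ) - (k : ℤ))) := by
    rw [← zpow_add₀ q1_ne]; congr 1; ring
  rw [hpow, pow_succ, pow_succ, mul_div_mul_comm]
  ring

lemma hnum (ℓ k : ℕ) :
    q1 ^ (-(ℓ : ℤ) + 2 * (2 * (k : ℤ) + 1) + 2) *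
        (q1 ^ (2 * (k : ℤ) + 2) - q1 ^ (-(2 * (k : ℤ) + 2))) *
        (q1 ^ (2 * (ℓ : ℤ) - 4 * (k : ℤ) - 2) * (1 - q1 ^ (-2 * (ℓ : ℤ)) * q1 ^ (4 * (k : ℤ)))) =
      -((q1 ^ ((ℓ : ℤ) - (2 * (k : ℤ) + 1) + 1) - q1 ^ (-((ℓ : ℤ) - (2 * (k : ℤ) + 1) + 1))) *
        (1 - q1 ^ (4 : ℤ) * q1 ^ (4 * (k : ℤ)))) := by
  have hq := q1_ne
  simp only [mul_sub, sub_mul, mul_one, one_mul, ← zpow_add₀ hq, neg_sub]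
  ring_nf

lemma dcl_step (ℓ : ℕ) (a : K1) (ha : a ≠ 0) (k : ℕ) :
    a * q1 ^ (-(ℓ : ℤ) + 2 * (2 * (k : ℤ) + 1) + 2) * qint (2 * (k : ℤ) + 2) * dcl ℓ a (k + 1)
      = qint ((ℓ : ℤ) - (2 * (k : ℤ) + 1) + 1) * dcl ℓ a k := by
  rw [dcl_succ]
  have key : a * q1 ^ (-(ℓ : ℤ) + 2 * (2 * (k : ℤ) + 1) + 2) * qint (2 * (k : ℤ) + 2) *
      ((-a⁻¹ * q1 ^ (2 * (ℓ : ℤ) - 4 * (k : ℤ) - 2) *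
          (1 - q1 ^ (-2 * (ℓ : ℤ)) * q1 ^ (4 * (k : ℤ)))) /
        (1 - q1 ^ (4 : ℤ) * q1 ^ (4 * (k : ℤ)))) = qint ((ℓ : ℤ) - (2 * (k : ℤ) + 1) + 1) := by
    unfold qint
    simp only [mul_div_assoc', div_mul_eq_mul_div, div_div]
    rw [div_eq_div_iff (mul_ne_zero den_ne (t_ne k)) den_ne]
    have ha1 : a * a⁻¹ = 1 := mul_inv_cancel₀ ha
    linear_combination (-(q1 - q1⁻¹)) * hnum ℓ k +
      (-(q1 ^ (-(ℓ : ℤ) + 2 * (2 * (k : ℤ) + 1) + 2) *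
          (q1 ^ (2 * (k : ℤ) + 2) - q1 ^ (-(2 * (k : ℤ) + 2))) *
          (q1 ^ (2 * (ℓ : ℤ) - 4 * (k : ℤ) - 2) *
            (1 - q1 ^ (-2 * (ℓ : ℤ)) * q1 ^ (4 * (k : ℤ)))) * (q1 - q1⁻¹))) * ha1
  linear_combination (dcl ℓ a k) * key

/-- odd-index coefficients vanish. -/
lemma odd_zero (ℓ : ℕ) (a : K1) (ha : a ≠ 0) (c : ℤ → K1) (h : Sol ℓ a c) :
    ∀ k : ℕ, 2 * k ≤ ℓ → c (2 * (k : ℤ) + 1) = 0 := by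
  intro k
  induction k with
  | zero =>
    intro hk
    have hrec := h.2.2 0 (by omega)
    norm_num at hrec
    rw [h.1, mul_zero] at hrec
    rcases mul_eq_zero.mp hrec with h' | h'
    · exact absurd h' (mul_ne_zero (mul_ne_zero ha (q1_zpow_ne _)) (qint_ne one_ne_zero))
    · norm_num
      exact h'
  | succ n ih =>
    intro hk
    have hrec := h.2.2 (2 * (n + 1)) (by omega)
    have e1 : ((2 * (n + 1) : ℕ) : ℤ) = 2 * (n : ℤ) + 2 := by push_cast; ring
    rw [e1] at hrec
    rw [show (2 * (n : ℤ) + 2 - 1) = 2 * (n : ℤ) + 1 from by ring] at hrec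
    rw [ih (by omega), mul_zero] at hrec
    rcases mul_eq_zero.mp hrec with h' | h'
    · exact absurd h' (mul_ne_zero (mul_ne_zero ha (q1_zpow_ne _)) (qint_ne (by omega)))
    · push_cast
      rw [show 2 * ((n : ℤ) + 1) + 1 = 2 * (n : ℤ) + 2 + 1 from by ring]
      exact h'

/-- downward induction for odd ℓ. -/
lemma down_zero (ℓ : ℕ) (a : K1) (ha : a ≠ 0) (c : ℤ → K1) (h : Sol ℓ a c) :
    ∀ i : ℕ, 2 * i ≤ ℓ + 1 → c ((ℓ : ℤ) + 1 - 2 * i) = 0 := by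
  intro i
  induction i with
  | zero => intro _; simpa using h.2.1
  | succ n ih =>
    intro hi
    have hrec := h.2.2 (ℓ - 2 * n) (by omega)
    have hj : ((ℓ - 2 * n : ℕ) : ℤ) = (ℓ : ℤ) - 2 * (n : ℤ) := by omega
    rw [hj] at hrec
    rw [show ((ℓ : ℤ) - 2 * (n : ℤ)) + 1 = (ℓ : ℤ) + 1 - 2 * (n : ℤ) from by ring] at hrec
    rw [ih (by omega), mul_zero] at hrec
    rw [show (ℓ : ℤ) - ((ℓ : ℤ) - 2 * (n : ℤ)) + 1 = 2 * (n : ℤ) + 1 from by ring] at hrec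
    rcases mul_eq_zero.mp hrec.symm with h' | h'
    · exact absurd h' (qint_ne (by omega))
    · push_cast
      rw [show (ℓ : ℤ) + 1 - 2 * ((n : ℤ) + 1) = (ℓ : ℤ) - 2 * (n : ℤ) - 1 from by ring]
      exact h'

/-- even-index formula. -/
lemma even_formula (ℓ : ℕ) (a : K1) (ha : a ≠ 0) (c : ℤ → K1) (h : Sol ℓ a c) :
    ∀ k : ℕ, 2 * k ≤ ℓ → c (2 * (k : ℤ)) = dcl ℓ a k * c 0 := by
  intro k
  induction k with
  | zero => intro _; norm_num [dcl_zero]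
  | succ n ih =>
    intro hk
    have hrec := h.2.2 (2 * n + 1) (by omega)
    have e1 : ((2 * n + 1 : ℕ) : ℤ) = 2 * (n : ℤ) + 1 := by push_cast; ring
    rw [e1] at hrec
    rw [show (2 * (n : ℤ) + 1 + 1) = 2 * (n : ℤ) + 2 from by ring,
      show (2 * (n : ℤ) + 1 - 1) = 2 * (n : ℤ) from by ring] at hrec
    rw [ih (by omega)] at hrec
    have hstep := dcl_step ℓ a ha n
    have hA : a * q1 ^ (-(ℓ : ℤ) + 2 * (2 * (n : ℤ) + 1) + 2) * qint (2 * (n : ℤ) + 2) ≠ 0 :=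
      mul_ne_zero (mul_ne_zero ha (q1_zpow_ne _)) (qint_ne (by omega))
    have goal2 : c (2 * (n : ℤ) + 2) = dcl ℓ a (n + 1) * c 0 := by
      apply mul_left_cancel₀ hA
      linear_combination hrec - (c 0) * hstep
    push_cast
    rw [show 2 * ((n : ℤ) + 1) = 2 * (n : ℤ) + 2 from by ring]
    exact goal2

/-- the explicit solution. -/
noncomputable def csol (ℓ : ℕ) (a : K1) : ℤ → K1 := fun n =>
  if 0 ≤ n ∧ n ≤ (ℓ : ℤ) ∧ n % 2 = 0 then dcl ℓ a (n.toNat / 2) else 0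

lemma csol_sol (ℓ : ℕ) (a : K1) (ha : a ≠ 0) (hev : Even ℓ) : Sol ℓ a (csol ℓ a) := by
  obtain ⟨t, ht⟩ := hev
  refine ⟨?_, ?_, ?_⟩
  · rw [csol, if_neg]; omega
  · rw [csol, if_neg]; omega
  · intro j hj
    rcases Nat.even_or_odd j with hje | hjo
    · obtain ⟨m, hm⟩ := hje
      have h1 : csol ℓ a ((j : ℤ) + 1) = 0 := by rw [csol, if_neg]; omega
      have h2 : csol ℓ a ((j : ℤ) - 1) = 0 := by rw [csol, if_neg]; omega
      rw [h1, h2, mul_zero, mul_zero]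
    · obtain ⟨m, hm⟩ := hjo
      have h1 : csol ℓ a ((j : ℤ) + 1) = dcl ℓ a (m + 1) := by
        rw [csol, if_pos (by omega)]; congr 1; omega
      have h2 : csol ℓ a ((j : ℤ) - 1) = dcl ℓ a m := by
        rw [csol, if_pos (by omega)]; congr 1; omega
      rw [h1, h2]
      have hjz : (j : ℤ) = 2 * (m : ℤ) + 1 := by omega
      rw [hjz]
      rw [show (2 * (m : ℤ) + 1 + 1) = 2 * (m : ℤ) + 2 from by ring]
      exact dcl_step ℓ a ha m

theorem stmt_4 (ℓ : ℕ) (a : K1) (ha : a ≠ 0) :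
    (Odd ℓ → ∀ c : ℤ → K1, Sol ℓ a c → ∀ j : ℕ, j ≤ ℓ → c j = 0) ∧
      (Even ℓ →
        (∀ c : ℤ → K1, Sol ℓ a c →
          (∀ k : ℕ, 2 * k + 1 ≤ ℓ → c (2 * (k : ℤ) + 1) = 0) ∧
          (∀ k : ℕ, 2 * k ≤ ℓ →
            c (2 * (k : ℤ)) =
              (-1) ^ k * (a⁻¹) ^ k * q1 ^ (2 * (k : ℤ) * ((ℓ : ℤ) - (k : ℤ))) *
                ((∏ i ∈ Finset.range k, (1 - q1 ^ (-2 * (ℓ : ℤ)) * q1 ^ (4 * (i : ℤ)))) /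
                  (∏ i ∈ Finset.range k, (1 - q1 ^ (4 : ℤ) * q1 ^ (4 * (i : ℤ))))) * c 0)) ∧
        ∃ c : ℤ → K1, Sol ℓ a c ∧ c 0 = 1) := by
  constructor
  · -- odd case
    intro hodd c hc j hj
    obtain ⟨s, hs⟩ := hodd
    rcases Nat.even_or_odd j with hje | hjo
    · obtain ⟨m, hm⟩ := hje
      have hm2 : 2 * (s + 1 - m) ≤ ℓ + 1 := by omega
      have := down_zero ℓ a ha c hc (s + 1 - m) hm2
      rw [show (ℓ : ℤ) + 1 - 2 * ((s + 1 - m : ℕ) : ℤ) = (j : ℤ) from by omega] at this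
      exact this
    · obtain ⟨m, hm⟩ := hjo
      have := odd_zero ℓ a ha c hc m (by omega)
      rw [show 2 * (m : ℤ) + 1 = (j : ℤ) from by omega] at this
      exact this
  · intro hev
    constructor
    · intro c hc
      constructor
      · intro k hk
        exact odd_zero ℓ a ha c hc k (by omega)
      · intro k hk
        have := even_formula ℓ a ha c hc k hk
        rw [this]
        unfold dcl
        ring
    · refine ⟨csol ℓ a, csol_sol ℓ a ha hev, ?_⟩
      rw [csol, if_pos (by omega)]
      norm_num [dcl_zero]

end
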